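/- Let n be a positive integer, M an n×n real matrix, and P an n×n real symmetric positive definite matrix. If M P Mᵀ ⪯ P in the Loewner order (i.e., P − M P Mᵀ is positive semidefinite), then every eigenvalue λ ∈ ℂ of M (i.e., of the complex matrix obtained by mapping the entries of M into ℂ) satisfies |λ| ≤ 1. -/

import Mathlib

open Matrix

private lemma re_quad_eq (n : ℕ) (Q : Matrix (Fin n) (Fin n) ℝ) (v : Fin n → ℂ) :
    (star v ⬝ᵥ (Q.map (algebraMap ℝ ℂ)) *ᵥ v).re
      = (fun i => (v i).re) ⬝ᵥ Q *ᵥ (fun i => (v i).re)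
      + (fun i => (v i).im) ⬝ᵥ Q *ᵥ (fun i => (v i).im) := by
  simp only [dotProduct, mulVec, Matrix.map_apply, Pi.star_apply, Complex.re_sum,
    Finset.mul_sum, ← Finset.sum_add_distrib]
  refine Finset.sum_congr rfl fun i _ => ?_
  refine Finset.sum_congr rfl fun j _ => ?_
  simp [Complex.mul_re, Complex.mul_im]

private lemma re_quad_nonneg (n : ℕ) (Q : Matrix (Fin n) (Fin n) ℝ)
    (hQ : Q.PosSemidef) (v : Fin n → ℂ) :
    0 ≤ (star v ⬝ᵥ (Q.map (algebraMap ℝ ℂ)) *ᵥ v).re := by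
  rw [re_quad_eq]
  have h1 := hQ.dotProduct_mulVec_nonneg (fun i => (v i).re)
  have h2 := hQ.dotProduct_mulVec_nonneg (fun i => (v i).im)
  simp only [Pi.star_apply, star_trivial] at h1 h2
  linarith

private lemma re_quad_pos (n : ℕ) (Q : Matrix (Fin n) (Fin n) ℝ)
    (hQ : Q.PosDef) (v : Fin n → ℂ) (hv : v ≠ 0) :
    0 < (star v ⬝ᵥ (Q.map (algebraMap ℝ ℂ)) *ᵥ v).re := by
  rw [re_quad_eq]
  have hre : (fun i => (v i).re) ≠ 0 ∨ (fun i => (v i).im) ≠ 0 := by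
    by_contra hc
    push_neg at hc
    apply hv
    funext i
    have h1 := congrFun hc.1 i
    have h2 := congrFun hc.2 i
    simp only [Pi.zero_apply] at h1 h2
    exact Complex.ext h1 h2
  have key : ∀ x : Fin n → ℝ, x ≠ 0 → 0 < x ⬝ᵥ Q *ᵥ x := by
    intro x hx
    have := hQ.dotProduct_mulVec_pos hx
    simpa using this
  have key' : ∀ x : Fin n → ℝ, 0 ≤ x ⬝ᵥ Q *ᵥ x := by
    intro x
    have := hQ.posSemidef.dotProduct_mulVec_nonneg x
    simpa using this
  rcases hre with h | h
  · have := key _ h; have := key' (fun i => (v i).im); linarith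
  · have := key _ h; have := key' (fun i => (v i).re); linarith

/-- Lyapunov-type lemma: if `M P Mᵀ ⪯ P` for a symmetric positive definite `P`,
then every (complex) eigenvalue of `M` has modulus at most `1`. -/
theorem stmt_0 (n : ℕ) (hn : 0 < n) (M P : Matrix (Fin n) (Fin n) ℝ)
    (hPsymm : P.IsSymm) (hP : P.PosDef)
    (h : (P - M * P * Mᵀ).PosSemidef)
    (lam : ℂ) (hlam : lam ∈ spectrum ℂ (M.map (algebraMap ℝ ℂ))) :
    ‖lam‖ ≤ 1 := by
  set A : Matrix (Fin n) (Fin n) ℂ := M.map (algebraMap ℝ ℂ) with hA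
  -- extract eigenvector of Aᵀ
  rw [spectrum.mem_iff] at hlam
  have hdet : (algebraMap ℂ (Matrix (Fin n) (Fin n) ℂ) lam - A).det = 0 := by
    by_contra hd
    exact hlam ((Matrix.isUnit_iff_isUnit_det _).2 (Ne.isUnit hd))
  have hdetT : (algebraMap ℂ (Matrix (Fin n) (Fin n) ℂ) lam - Aᵀ).det = 0 := by
    have : (algebraMap ℂ (Matrix (Fin n) (Fin n) ℂ) lam - Aᵀ)
        = (algebraMap ℂ (Matrix (Fin n) (Fin n) ℂ) lam - A)ᵀ := by
      rw [Matrix.transpose_sub]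
      congr 1
      simp [Matrix.algebraMap_eq_diagonal]
    rw [this, Matrix.det_transpose, hdet]
  obtain ⟨v, hv0, hv⟩ := (Matrix.exists_mulVec_eq_zero_iff).2 hdetT
  have heig : Aᵀ *ᵥ v = lam • v := by
    have := hv
    rw [Matrix.sub_mulVec] at this
    have h1 : algebraMap ℂ (Matrix (Fin n) (Fin n) ℂ) lam *ᵥ v = lam • v := by
      funext i
      simp [Matrix.algebraMap_eq_diagonal, Matrix.mulVec_diagonal, Pi.algebraMap_apply]
    rw [h1] at this
    exact (sub_eq_zero.mp this).symm
  -- quadratic forms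
  set q : ℝ := (star v ⬝ᵥ (P.map (algebraMap ℝ ℂ)) *ᵥ v).re with hq
  have hqpos : 0 < q := re_quad_pos n P hP v hv0
  have hMPMT : ((M * P * Mᵀ).map (algebraMap ℝ ℂ)) = A * (P.map (algebraMap ℝ ℂ)) * Aᵀ := by
    have h1 : ∀ (X Y : Matrix (Fin n) (Fin n) ℝ),
        (X * Y).map (algebraMap ℝ ℂ) = X.map (algebraMap ℝ ℂ) * Y.map (algebraMap ℝ ℂ) := by
      intro X Y
      exact Matrix.map_mul
    rw [h1, h1, ← Matrix.transpose_map]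
  have hAH : Aᴴ = Aᵀ := by
    funext i j
    simp [hA, Matrix.conjTranspose_apply]
  have key : (star v ⬝ᵥ ((M * P * Mᵀ).map (algebraMap ℝ ℂ)) *ᵥ v)
      = (‖lam‖ : ℂ)^2 * (star v ⬝ᵥ (P.map (algebraMap ℝ ℂ)) *ᵥ v) := by
    have hATH : Aᵀᴴ = A := by
      funext i j
      simp [hA, Matrix.conjTranspose_apply]
    have hsv : star v ᵥ* A = star (lam • v) := by
      rw [← heig, Matrix.star_mulVec, hATH]
    rw [hMPMT, Matrix.mul_assoc, ← Matrix.mulVec_mulVec, Matrix.dotProduct_mulVec, hsv]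
    rw [← Matrix.mulVec_mulVec, heig, Matrix.mulVec_smul, dotProduct_smul]
    have hstar : star (lam • v) = (starRingEnd ℂ lam) • star v := by
      funext i; simp [mul_comm]
    rw [hstar, smul_dotProduct, smul_eq_mul, smul_eq_mul, ← mul_assoc]
    congr 1
    rw [Complex.mul_conj, ← Complex.sq_norm]
    push_cast
    ring
  have hsub : ((P - M * P * Mᵀ).map (algebraMap ℝ ℂ))
      = P.map (algebraMap ℝ ℂ) - (M * P * Mᵀ).map (algebraMap ℝ ℂ) := by
    funext i j; simp
  have hpsd := re_quad_nonneg n (P - M * P * Mᵀ) h v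
  rw [re_quad_eq] at hpsd
  have hval : (star v ⬝ᵥ ((P - M * P * Mᵀ).map (algebraMap ℝ ℂ)) *ᵥ v).re
      = q - (‖lam‖)^2 * q := by
    rw [hsub, Matrix.sub_mulVec, dotProduct_sub, Complex.sub_re, key]
    have : ((‖lam‖ : ℂ)^2) = (((‖lam‖)^2 : ℝ) : ℂ) := by push_cast; ring
    rw [this, Complex.re_ofReal_mul]
  rw [← re_quad_eq] at hpsd
  rw [hval] at hpsd
  have habs2 : (‖lam‖)^2 ≤ 1 := by
    by_contra hc
    push_neg at hc
    nlinarith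
  nlinarith [norm_nonneg lam]
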